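/- Let n ∈ ℕ, let S_c : ℝⁿ → ℝ be differentiable, and let R : Fin n → (ℝⁿ → ℝ) be a family of differentiable functions. Define S̄ : ℝⁿ × ℝⁿ → ℝ by S̄(x, k) := S_c(x) − Σ_α R^α(x) k_α, and define the bracket B(X, Y)(x, k) := Σ_α (∂X/∂x_α · ∂Y/∂k_α + ∂X/∂k_α · ∂Y/∂x_α). Then B(S̄, S̄)(x, k) = 0 for all (x, k) ∈ ℝⁿ × ℝⁿ if and only if both (i) Σ_α R^α(x) ∂S_c/∂x_α(x) = 0 for all x (gauge invariance of the classical action), and (ii) Σ_α R^α(x) ∂R^β/∂x_α(x) = 0 for all x and all β (closure of the gauge algebra). -/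

import Mathlib

private lemma bv_fderiv_eval (n : ℕ) (Sc : (Fin n → ℝ) → ℝ) (R : Fin n → (Fin n → ℝ) → ℝ)
    (hSc : Differentiable ℝ Sc) (hR : ∀ α, Differentiable ℝ (R α))
    (p : (Fin n → ℝ) × (Fin n → ℝ)) (v w : Fin n → ℝ) :
    fderiv ℝ (fun q : (Fin n → ℝ) × (Fin n → ℝ) =>
        Sc q.1 - ∑ β : Fin n, R β q.1 * q.2 β) p (v, w)
      = fderiv ℝ Sc p.1 v - ∑ β : Fin n,
          (fderiv ℝ (R β) p.1 v * p.2 β + R β p.1 * w β) := by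
  have h1 : HasFDerivAt (fun q : (Fin n → ℝ) × (Fin n → ℝ) => Sc q.1)
      ((fderiv ℝ Sc p.1).comp (ContinuousLinearMap.fst ℝ _ _)) p :=
    ((hSc p.1).hasFDerivAt).comp p (hasFDerivAt_fst)
  have h2 : ∀ β : Fin n, HasFDerivAt (fun q : (Fin n → ℝ) × (Fin n → ℝ) => R β q.1 * q.2 β)
      (R β p.1 • ((ContinuousLinearMap.proj β).comp
          (ContinuousLinearMap.snd ℝ (Fin n → ℝ) (Fin n → ℝ))) +
        p.2 β • ((fderiv ℝ (R β) p.1).comp (ContinuousLinearMap.fst ℝ _ _))) p := by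
    intro β
    exact (((hR β p.1).hasFDerivAt).comp p (hasFDerivAt_fst)).mul
      (((ContinuousLinearMap.proj β).comp
        (ContinuousLinearMap.snd ℝ (Fin n → ℝ) (Fin n → ℝ))).hasFDerivAt)
  have hF := h1.fun_sub (HasFDerivAt.fun_sum (u := Finset.univ) (fun β _ => h2 β))
  rw [hF.fderiv]
  simp [Finset.sum_add_distrib, mul_comm]
  ring

/-- Finite-dimensional model of the BV master equation: for `S̄(x,k) = S_c(x) − Σ_α R^α(x) k_α`
and the bracket `B(X,Y) = Σ_α (∂X/∂x_α ∂Y/∂k_α + ∂X/∂k_α ∂Y/∂x_α)`, one has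
`B(S̄,S̄) ≡ 0` iff the classical action is gauge invariant and the gauge algebra closes. -/
theorem master_equation_splits (n : ℕ) (Sc : (Fin n → ℝ) → ℝ)
    (R : Fin n → (Fin n → ℝ) → ℝ)
    (hSc : Differentiable ℝ Sc) (hR : ∀ α, Differentiable ℝ (R α)) :
    (∀ p : (Fin n → ℝ) × (Fin n → ℝ),
        (∑ α : Fin n,
          (fderiv ℝ (fun q : (Fin n → ℝ) × (Fin n → ℝ) =>
              Sc q.1 - ∑ β : Fin n, R β q.1 * q.2 β) p (Pi.single α 1, 0) *
            fderiv ℝ (fun q : (Fin n → ℝ) × (Fin n → ℝ) =>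
              Sc q.1 - ∑ β : Fin n, R β q.1 * q.2 β) p (0, Pi.single α 1) +
          fderiv ℝ (fun q : (Fin n → ℝ) × (Fin n → ℝ) =>
              Sc q.1 - ∑ β : Fin n, R β q.1 * q.2 β) p (0, Pi.single α 1) *
            fderiv ℝ (fun q : (Fin n → ℝ) × (Fin n → ℝ) =>
              Sc q.1 - ∑ β : Fin n, R β q.1 * q.2 β) p (Pi.single α 1, 0))) = 0)
    ↔ ((∀ x : Fin n → ℝ, ∑ α : Fin n, R α x * fderiv ℝ Sc x (Pi.single α 1) = 0) ∧
        (∀ x : Fin n → ℝ, ∀ β : Fin n,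
          ∑ α : Fin n, R α x * fderiv ℝ (R β) x (Pi.single α 1) = 0)) := by
  -- Rewrite the bracket expression in closed form.
  have key : ∀ p : (Fin n → ℝ) × (Fin n → ℝ),
      (∑ α : Fin n,
          (fderiv ℝ (fun q : (Fin n → ℝ) × (Fin n → ℝ) =>
              Sc q.1 - ∑ β : Fin n, R β q.1 * q.2 β) p (Pi.single α 1, 0) *
            fderiv ℝ (fun q : (Fin n → ℝ) × (Fin n → ℝ) =>
              Sc q.1 - ∑ β : Fin n, R β q.1 * q.2 β) p (0, Pi.single α 1) +
          fderiv ℝ (fun q : (Fin n → ℝ) × (Fin n → ℝ) =>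
              Sc q.1 - ∑ β : Fin n, R β q.1 * q.2 β) p (0, Pi.single α 1) *
            fderiv ℝ (fun q : (Fin n → ℝ) × (Fin n → ℝ) =>
              Sc q.1 - ∑ β : Fin n, R β q.1 * q.2 β) p (Pi.single α 1, 0)))
      = -2 * ∑ α : Fin n, R α p.1 *
          (fderiv ℝ Sc p.1 (Pi.single α 1)
            - ∑ β : Fin n, fderiv ℝ (R β) p.1 (Pi.single α 1) * p.2 β) := by
    intro p
    have e1 : ∀ α : Fin n,
        fderiv ℝ (fun q : (Fin n → ℝ) × (Fin n → ℝ) =>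
            Sc q.1 - ∑ β : Fin n, R β q.1 * q.2 β) p (Pi.single α 1, 0)
        = fderiv ℝ Sc p.1 (Pi.single α 1)
            - ∑ β : Fin n, fderiv ℝ (R β) p.1 (Pi.single α 1) * p.2 β := by
      intro α
      rw [bv_fderiv_eval n Sc R hSc hR p (Pi.single α 1) 0]
      simp
    have e2 : ∀ α : Fin n,
        fderiv ℝ (fun q : (Fin n → ℝ) × (Fin n → ℝ) =>
            Sc q.1 - ∑ β : Fin n, R β q.1 * q.2 β) p (0, Pi.single α 1)
        = -(R α p.1) := by
      intro α
      rw [bv_fderiv_eval n Sc R hSc hR p 0 (Pi.single α 1)]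
      simp [Pi.single_apply, mul_ite, Finset.sum_ite_eq']
    simp only [e1, e2, Finset.mul_sum]
    rw [Finset.sum_congr rfl (fun α _ => by ring :
      ∀ α ∈ Finset.univ, ((fderiv ℝ Sc p.1 (Pi.single α 1)
            - ∑ β : Fin n, fderiv ℝ (R β) p.1 (Pi.single α 1) * p.2 β) * -(R α p.1)
        + -(R α p.1) * (fderiv ℝ Sc p.1 (Pi.single α 1)
            - ∑ β : Fin n, fderiv ℝ (R β) p.1 (Pi.single α 1) * p.2 β))
        = -2 * (R α p.1 * (fderiv ℝ Sc p.1 (Pi.single α 1)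
            - ∑ β : Fin n, fderiv ℝ (R β) p.1 (Pi.single α 1) * p.2 β)))]
  constructor
  · intro h
    have hA : ∀ x : Fin n → ℝ,
        ∑ α : Fin n, R α x * fderiv ℝ Sc x (Pi.single α 1) = 0 := by
      intro x
      have := h (x, 0)
      rw [key (x, 0)] at this
      simp at this
      simpa using this
    refine ⟨hA, fun x β => ?_⟩
    have := h (x, Pi.single β 1)
    rw [key (x, Pi.single β 1)] at this
    simp only [neg_mul, neg_eq_zero, mul_eq_zero, OfNat.ofNat_ne_zero, false_or] at this
    have hsum : ∑ α : Fin n, R α x *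
        (fderiv ℝ Sc x (Pi.single α 1) - fderiv ℝ (R β) x (Pi.single α 1)) = 0 := by
      convert this using 2 with α
      congr 1
      simp [Pi.single_apply, mul_ite, Finset.sum_ite_eq']
    have expand : ∑ α : Fin n, R α x *
        (fderiv ℝ Sc x (Pi.single α 1) - fderiv ℝ (R β) x (Pi.single α 1))
        = (∑ α : Fin n, R α x * fderiv ℝ Sc x (Pi.single α 1))
          - ∑ α : Fin n, R α x * fderiv ℝ (R β) x (Pi.single α 1) := by
      rw [← Finset.sum_sub_distrib]
      exact Finset.sum_congr rfl fun α _ => by ring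
    rw [expand, hA x] at hsum
    linarith
  · rintro ⟨hA, hC⟩ p
    rw [key p]
    have : ∑ α : Fin n, R α p.1 *
        (fderiv ℝ Sc p.1 (Pi.single α 1)
          - ∑ β : Fin n, fderiv ℝ (R β) p.1 (Pi.single α 1) * p.2 β) = 0 := by
      have expand : ∑ α : Fin n, R α p.1 *
          (fderiv ℝ Sc p.1 (Pi.single α 1)
            - ∑ β : Fin n, fderiv ℝ (R β) p.1 (Pi.single α 1) * p.2 β)
          = (∑ α : Fin n, R α p.1 * fderiv ℝ Sc p.1 (Pi.single α 1))
            - ∑ α : Fin n, ∑ β : Fin n,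
                R α p.1 * fderiv ℝ (R β) p.1 (Pi.single α 1) * p.2 β := by
        rw [← Finset.sum_sub_distrib]
        refine Finset.sum_congr rfl fun α _ => ?_
        rw [mul_sub, Finset.mul_sum]
        congr 1
        exact Finset.sum_congr rfl fun β _ => by ring
      rw [expand, hA p.1, Finset.sum_comm]
      have : ∀ β : Fin n, ∑ α : Fin n,
          R α p.1 * fderiv ℝ (R β) p.1 (Pi.single α 1) * p.2 β = 0 := by
        intro β
        rw [← Finset.sum_mul, hC p.1 β, zero_mul]
      simp [this]
    rw [this, mul_zero]
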